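/- For every integer n ≥ 3 and every numerical semigroup S with maximum primitive n, the primitive depth of S equals the depth of Φ(S), where Φ(S) = (S \ {n}) ∪ (n, ∞). That is, ⌈max P(S)/min P(S)⌉ = ⌈F(Φ(S))/m(Φ(S))⌉. -/
import Mathlib


/-- A numerical semigroup: a cofinite additive submonoid of ℕ containing 0. -/
structure NumericalSemigroup where
  carrier : Set ℕ
  zero_mem : 0 ∈ carrier
  add_mem : ∀ ⦃a b : ℕ⦄, a ∈ carrier → b ∈ carrier → a + b ∈ carrier
  cofinite : (carrierᶜ : Set ℕ).Finite

namespace NumericalSemigroup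

/-- The primitives (minimal generators): nonzero elements not expressible as a sum
of two nonzero elements. -/
def primitives (S : NumericalSemigroup) : Set ℕ :=
  {x | x ∈ S.carrier ∧ x ≠ 0 ∧
    ¬ ∃ a b : ℕ, a ∈ S.carrier ∧ b ∈ S.carrier ∧ a ≠ 0 ∧ b ≠ 0 ∧ x = a + b}

/-- The maximum primitive. -/
noncomputable def maxPrim (S : NumericalSemigroup) : ℕ := sSup (primitives S)

/-- The multiplicity: the least primitive (= least nonzero element). -/
noncomputable def multiplicity (S : NumericalSemigroup) : ℕ := sInf (primitives S)

/-- The Frobenius number: the largest gap (0 for ℕ by convention here). -/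
noncomputable def frob (S : NumericalSemigroup) : ℕ := sSup (S.carrierᶜ)

/-- The set of left elements. -/
noncomputable def lefts (S : NumericalSemigroup) : Set ℕ := S.carrier ∩ Set.Iio (frob S)

/-- The extended set of left elements. -/
noncomputable def extLefts (S : NumericalSemigroup) : Set ℕ := lefts S ∪ {frob S}

end NumericalSemigroup

open NumericalSemigroup

/-- The gcd of a set of naturals: the greatest common divisor of all its elements. -/
noncomputable def setGcd (A : Set ℕ) : ℕ := sSup {d | ∀ x ∈ A, d ∣ x}

/-- The number of numerical semigroups with maximum primitive `n`. -/
noncomputable def countMaxPrim (n : ℕ) : ℕ :=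
  {S : NumericalSemigroup | maxPrim S = n}.ncard

/-- The number of numerical semigroups with Frobenius number `n`. -/
noncomputable def countFrob (n : ℕ) : ℕ :=
  {S : NumericalSemigroup | frob S = n}.ncard

lemma NS.nonzeroSet_nonempty (S : NumericalSemigroup) :
    {x | x ∈ S.carrier ∧ x ≠ 0}.Nonempty := by
  have hinf : S.carrier.Infinite := by
    have h := S.cofinite.infinite_compl
    rwa [compl_compl] at h
  obtain ⟨a, ha, h0⟩ := hinf.exists_gt 0
  exact ⟨a, ha, by omega⟩

/-- The least nonzero element is primitive, and equals the multiplicity. -/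
lemma NS.sInf_primitive (S : NumericalSemigroup) :
    sInf {x | x ∈ S.carrier ∧ x ≠ 0} ∈ S.primitives ∧
      S.multiplicity = sInf {x | x ∈ S.carrier ∧ x ≠ 0} := by
  set A := {x | x ∈ S.carrier ∧ x ≠ 0} with hA
  have hAne := NS.nonzeroSet_nonempty S
  have hm : sInf A ∈ A := Nat.sInf_mem hAne
  have hprim : sInf A ∈ S.primitives := by
    refine ⟨hm.1, hm.2, ?_⟩
    rintro ⟨a, b, haS, hbS, ha0, hb0, hab⟩
    have h1 : sInf A ≤ a := Nat.sInf_le ⟨haS, ha0⟩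
    omega
  refine ⟨hprim, ?_⟩
  have h1 : S.multiplicity ≤ sInf A := Nat.sInf_le hprim
  have h2 : sInf A ≤ S.multiplicity := by
    have hne : S.primitives.Nonempty := ⟨_, hprim⟩
    have : sInf S.primitives ∈ S.primitives := Nat.sInf_mem hne
    exact Nat.sInf_le ⟨this.1, this.2.1⟩
  omega

theorem pdepth_eq_depth_Phi (n : ℕ) (hn : 3 ≤ n) (S T : NumericalSemigroup)
    (hS : maxPrim S = n)
    (hT : T.carrier = (S.carrier \ {n}) ∪ Set.Ioi n) :
    ⌈(maxPrim S : ℚ) / (multiplicity S : ℚ)⌉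
      = ⌈(frob T : ℚ) / (multiplicity T : ℚ)⌉ := by
  obtain ⟨hprimS, hmultS⟩ := NS.sInf_primitive S
  set m := sInf {x | x ∈ S.carrier ∧ x ≠ 0} with hm
  -- primitives S is bounded above
  have hbdd : BddAbove S.primitives := by
    by_contra hb
    have : maxPrim S = 0 := by
      unfold maxPrim
      rw [csSup_of_not_bddAbove hb, csSup_empty]
      rfl
    omega
  have hne : S.primitives.Nonempty := ⟨m, hprimS⟩
  have hnmem : n ∈ S.primitives := by
    have := Nat.sSup_mem hne hbdd
    rwa [show sSup S.primitives = n from hS] at this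
  have hmle : m ≤ S.multiplicity := le_of_eq hmultS.symm
  have hmlen : m ≤ n := Nat.sInf_le ⟨hnmem.1, hnmem.2.1⟩
  -- m ≠ n
  have hmne : m ≠ n := by
    intro heq
    -- every element of S is divisible by n
    have hdvd : ∀ x, x ∈ S.carrier → n ∣ x := by
      intro x
      induction x using Nat.strong_induction_on with
      | _ x ih =>
        intro hx
        rcases eq_or_ne x 0 with rfl | hx0
        · exact dvd_zero n
        by_cases hp : ∃ a b : ℕ, a ∈ S.carrier ∧ b ∈ S.carrier ∧ a ≠ 0 ∧ b ≠ 0 ∧ x = a + b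
        · obtain ⟨a, b, haS, hbS, ha0, hb0, rfl⟩ := hp
          have hna : n ≤ a := heq ▸ Nat.sInf_le ⟨haS, ha0⟩
          have hnb : n ≤ b := heq ▸ Nat.sInf_le ⟨hbS, hb0⟩
          exact dvd_add (ih a (by omega) haS) (ih b (by omega) hbS)
        · have hxp : x ∈ S.primitives := ⟨hx, hx0, hp⟩
          have hxle : x ≤ n := hS ▸ le_csSup hbdd hxp
          have hxge : n ≤ x := heq ▸ Nat.sInf_le ⟨hx, hx0⟩
          have : x = n := le_antisymm hxle hxge
          exact this ▸ dvd_refl n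
    -- but then numbers ≡ 1 mod n are all gaps, infinitely many
    have hinfc : (S.carrierᶜ : Set ℕ).Infinite := by
      apply Set.infinite_of_injective_forall_mem
        (f := fun k : ℕ => k * n + 1)
      · intro a b hab
        have h : a * n + 1 = b * n + 1 := hab
        have h2 : a * n = b * n := by omega
        exact Nat.eq_of_mul_eq_mul_right (by omega) h2
      · intro k
        simp only [Set.mem_compl_iff]
        intro hmem
        have hd := hdvd _ hmem
        have hkn : n ∣ k * n := ⟨k, mul_comm k n⟩
        have h1 : n ∣ 1 := (Nat.dvd_add_right hkn).mp hd
        have := Nat.le_of_dvd one_pos h1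
        omega
    exact hinfc S.cofinite
  have hmltn : m < n := lt_of_le_of_ne hmlen hmne
  -- multiplicity T = m
  obtain ⟨hprimT, hmultT⟩ := NS.sInf_primitive T
  have hmT : m ∈ {x | x ∈ T.carrier ∧ x ≠ 0} := by
    have hmS : m ∈ S.carrier := hprimS.1
    have hm0 : m ≠ 0 := hprimS.2.1
    refine ⟨?_, hm0⟩
    rw [hT]
    exact Or.inl ⟨hmS, by simpa using hmne⟩
  have hmultTm : T.multiplicity = m := by
    rw [hmultT]
    set y := sInf {x | x ∈ T.carrier ∧ x ≠ 0} with hy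
    apply le_antisymm (Nat.sInf_le hmT)
    have hmem : y ∈ {x | x ∈ T.carrier ∧ x ≠ 0} := Nat.sInf_mem ⟨m, hmT⟩
    obtain ⟨hx1, hx2⟩ := hmem
    rw [hT] at hx1
    rcases hx1 with ⟨hxS, _⟩ | hxI
    · exact Nat.sInf_le ⟨hxS, hx2⟩
    · have : n < y := hxI
      omega
  -- frob T = n
  have hfrobT : frob T = n := by
    have hnmemC : n ∈ T.carrierᶜ := by
      intro hmem
      rw [hT] at hmem
      rcases hmem with ⟨_, hne⟩ | hgt
      · exact hne rfl
      · exact lt_irrefl n hgt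
    have hub : ∀ x ∈ T.carrierᶜ, x ≤ n := by
      intro x hx
      by_contra hgt
      apply hx
      rw [hT]
      exact Or.inr (Set.mem_Ioi.mpr (by omega))
    exact le_antisymm (csSup_le ⟨n, hnmemC⟩ hub) (le_csSup ⟨n, hub⟩ hnmemC)
  rw [hS, hfrobT, hmultTm, hmultS]
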